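/- arXiv:1104.3077 — 7 statements merged into one kernel-verified Lean document; each statement's English description precedes it below -/
import Mathlib

section
/- The set of ill-founded tree codes is complete analytic: for every closed set Y ⊆ (ℕ → ℕ) × (ℕ → ℕ) there exists a continuous function f from Baire space to the space of functions List ℕ → ℕ (with the product topology) such that for all α, (∃β, (α, β) ∈ Y) if and only if there exists β : ℕ → ℕ with (f α) [β 0, …, β (n-1)] = 0 for all n. -/
/-- The initial segment `[β 0, …, β (n-1)]` of an infinite sequence `β`. -/
def seg (β : ℕ → ℕ) (n : ℕ) : List ℕ := (List.range n).map β

lemma seg_length (β : ℕ → ℕ) (n : ℕ) : (seg β n).length = n := by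
  simp [seg]

lemma seg_eq_iff (α β : ℕ → ℕ) (n : ℕ) :
    seg α n = seg β n ↔ ∀ i < n, α i = β i := by
  constructor
  · intro h i hi
    have := congrArg (fun l : List ℕ => l[i]?) h
    simpa [seg, hi] using this
  · intro h
    apply List.ext_get (by simp [seg])
    intro i h1 h2
    simp only [seg, List.get_eq_getElem, List.getElem_map, List.getElem_range]
    exact h i (by simpa [seg] using h1)

lemma isOpen_seg_eq (α : ℕ → ℕ) (n : ℕ) :
    IsOpen {α' : ℕ → ℕ | seg α' n = seg α n} := by
  have : {α' : ℕ → ℕ | seg α' n = seg α n} =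
      Set.pi (↑(Finset.range n) : Set ℕ) (fun i => {α i}) := by
    ext α'
    simp [seg_eq_iff, Set.mem_pi]
  rw [this]
  exact isOpen_set_pi (Finset.finite_toSet _) (fun i _ => isOpen_discrete _)

/-- The set of ill-founded tree codes is complete analytic: every analytic set,
i.e. every projection of a closed subset of `(ℕ → ℕ) × (ℕ → ℕ)`, is reduced to
it by a continuous function. -/
theorem illfounded_complete_analytic
    (Y : Set ((ℕ → ℕ) × (ℕ → ℕ))) (hY : IsClosed Y) :
    ∃ f : (ℕ → ℕ) → (List ℕ → ℕ), Continuous f ∧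
      ∀ α : ℕ → ℕ,
        (∃ β, (α, β) ∈ Y) ↔ ∃ β : ℕ → ℕ, ∀ n, f α (seg β n) = 0 := by
  classical
  set f : (ℕ → ℕ) → (List ℕ → ℕ) := fun α s =>
    if ∃ p ∈ Y, seg p.1 s.length = seg α s.length ∧ seg p.2 s.length = s
    then 0 else 1 with hf
  refine ⟨f, ?_, ?_⟩
  · apply continuous_pi
    intro s
    apply IsLocallyConstant.continuous
    rw [IsLocallyConstant.iff_exists_open]
    intro α
    refine ⟨{α' : ℕ → ℕ | seg α' s.length = seg α s.length},
      isOpen_seg_eq α s.length, rfl, ?_⟩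
    intro α' hα'
    simp only [Set.mem_setOf_eq] at hα'
    simp only [hf, hα']
  · intro α
    constructor
    · rintro ⟨β, hβ⟩ 
      refine ⟨β, fun n => ?_⟩
      have : ∃ p ∈ Y, seg p.1 (seg β n).length = seg α (seg β n).length ∧
          seg p.2 (seg β n).length = seg β n := ⟨(α, β), hβ, by simp [seg_length]⟩
      simp only [hf, if_pos this]
    · rintro ⟨β, hβ⟩
      have key : ∀ n, ∃ p ∈ Y, seg p.1 n = seg α n ∧ seg p.2 n = seg β n := by
        intro n
        have h := hβ n
        simp only [hf] at h
        rw [seg_length] at h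
        by_contra hc
        rw [if_neg] at h
        · exact one_ne_zero h
        · push_neg at hc
          push_neg
          exact hc
      choose p hpY hp1 hp2 using key
      refine ⟨β, ?_⟩
      have htend : Filter.Tendsto p Filter.atTop (nhds (α, β)) := by
        rw [nhds_prod_eq, Filter.tendsto_prod_iff']
        constructor
        · rw [tendsto_pi_nhds]
          intro i
          apply Filter.Tendsto.congr' (f₁ := fun _ => α i)
          · filter_upwards [Filter.eventually_ge_atTop (i+1)] with n hn
            exact ((seg_eq_iff _ _ n).mp (hp1 n) i (by omega)).symm
          · exact tendsto_const_nhds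
        · rw [tendsto_pi_nhds]
          intro i
          apply Filter.Tendsto.congr' (f₁ := fun _ => β i)
          · filter_upwards [Filter.eventually_ge_atTop (i+1)] with n hn
            exact ((seg_eq_iff _ _ n).mp (hp2 n) i (by omega)).symm
          · exact tendsto_const_nhds
      exact hY.mem_of_tendsto htend (Filter.Eventually.of_forall hpY)
end

section
/- The set of well-founded tree codes is complete co-analytic: for every open set U ⊆ (ℕ → ℕ) × (ℕ → ℕ) there exists a continuous function f from Baire space to the space of functions List ℕ → ℕ such that for all α, (∀β, (α, β) ∈ U) if and only if for every β : ℕ → ℕ there exists n with (f α) [β 0, …, β (n-1)] ≠ 0. -/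
open Classical in
/-- Auxiliary: nonzero iff the basic cylinder of `α` (length `|s|`) and `s` is in `U`. -/
noncomputable def auxF (U : Set ((ℕ → ℕ) × (ℕ → ℕ))) (α : ℕ → ℕ) (s : List ℕ) : ℕ :=
  if (∀ p : (ℕ → ℕ) × (ℕ → ℕ), (∀ i < s.length, p.1 i = α i) →
      (∀ i < s.length, p.2 i = s.getD i 0) → p ∈ U) then 1 else 0

lemma mem_nhds_cyl {u : Set (ℕ → ℕ)} {α : ℕ → ℕ} (hu : u ∈ nhds α) :
    ∃ n, ∀ α' : ℕ → ℕ, (∀ i < n, α' i = α i) → α' ∈ u := by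
  rw [nhds_pi, Filter.mem_pi] at hu
  obtain ⟨I, hIf, t, ht, hsub⟩ := hu
  obtain ⟨m, hm⟩ := hIf.bddAbove
  refine ⟨m + 1, fun α' hα' => hsub ?_⟩
  intro i hi
  rw [hα' i (Nat.lt_succ_of_le (hm hi))]
  exact mem_of_mem_nhds (ht i)

lemma key {U : Set ((ℕ → ℕ) × (ℕ → ℕ))} (hU : IsOpen U) {α β : ℕ → ℕ}
    (h : (α, β) ∈ U) :
    ∃ n, ∀ p : (ℕ → ℕ) × (ℕ → ℕ), (∀ i < n, p.1 i = α i) →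
      (∀ i < n, p.2 i = β i) → p ∈ U := by
  have h1 : U ∈ nhds (α, β) := hU.mem_nhds h
  rw [nhds_prod_eq, Filter.mem_prod_iff] at h1
  obtain ⟨u, hu, v, hv, huv⟩ := h1
  obtain ⟨n1, h1⟩ := mem_nhds_cyl hu
  obtain ⟨n2, h2⟩ := mem_nhds_cyl hv
  refine ⟨max n1 n2, fun p hp1 hp2 => huv ⟨?_, ?_⟩⟩
  · exact h1 _ fun i hi => hp1 i (lt_of_lt_of_le hi (le_max_left _ _))
  · exact h2 _ fun i hi => hp2 i (lt_of_lt_of_le hi (le_max_right _ _))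

lemma seg_getD {β : ℕ → ℕ} {n i : ℕ} (h : i < n) : (seg β n).getD i 0 = β i := by
  rw [List.getD_eq_getElem _ _ (by simp [seg_length, h])]
  simp [seg]

/-- The set of well-founded tree codes is complete co-analytic: every
co-analytic set, i.e. every co-projection of an open subset of
`(ℕ → ℕ) × (ℕ → ℕ)`, is reduced to it by a continuous function. -/
theorem wellfounded_complete_coanalytic
    (U : Set ((ℕ → ℕ) × (ℕ → ℕ))) (hU : IsOpen U) :
    ∃ f : (ℕ → ℕ) → (List ℕ → ℕ), Continuous f ∧
      ∀ α : ℕ → ℕ,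
        (∀ β, (α, β) ∈ U) ↔ ∀ β : ℕ → ℕ, ∃ n, f α (seg β n) ≠ 0 := by
  refine ⟨auxF U, ?_, ?_⟩
  · apply continuous_pi
    intro s
    apply IsLocallyConstant.continuous
    rw [IsLocallyConstant.iff_exists_open]
    intro α
    refine ⟨(Set.Iio s.length).pi (fun i => {α i}), ?_, ?_, ?_⟩
    · exact isOpen_set_pi (Set.finite_Iio _) (fun i _ => isOpen_discrete _)
    · intro i _; rfl
    · intro α' hα'
      have heq : ∀ i < s.length, α' i = α i := fun i hi => hα' i hi
      unfold auxF
      congr 1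
      apply propext
      constructor <;> intro h p hp1 hp2 <;> apply h p _ hp2 <;>
        intro i hi <;> rw [hp1 i hi, heq i hi]
  · intro α
    constructor
    · intro hα β
      obtain ⟨n, hn⟩ := key hU (hα β)
      refine ⟨n, ?_⟩
      unfold auxF
      rw [if_pos]
      · exact one_ne_zero
      · intro p hp1 hp2
        rw [seg_length] at hp1 hp2
        exact hn p hp1 (fun i hi => by rw [hp2 i hi, seg_getD hi])
    · intro h β
      obtain ⟨n, hn⟩ := h β
      unfold auxF at hn
      by_cases hc : (∀ p : (ℕ → ℕ) × (ℕ → ℕ),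
          (∀ i < (seg β n).length, p.1 i = α i) →
          (∀ i < (seg β n).length, p.2 i = (seg β n).getD i 0) → p ∈ U)
      · exact hc (α, β) (fun i _ => rfl)
          (fun i hi => by rw [seg_length] at hi; exact (seg_getD hi).symm)
      · exact absurd (if_neg hc) hn
end

section
/- E¹₁ positively fails to reduce to A¹₁: for every continuous F : (List ℕ → ℕ) → (List ℕ → ℕ) such that F maps every element of E¹₁ into A¹₁, there exists α such that both α and F α belong to A¹₁. -/
/-- The set of ill-founded tree codes. -/
def E11 : Set (List ℕ → ℕ) := {γ | ∃ β : ℕ → ℕ, ∀ n, γ (seg β n) = 0}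

/-- The set of well-founded tree codes. -/
def A11 : Set (List ℕ → ℕ) := {γ | ∀ β : ℕ → ℕ, ∃ n, γ (seg β n) ≠ 0}

namespace E11Red
open Encodable

noncomputable def eL : ℕ → List ℕ := fun n => (decode (α := List ℕ) n).getD []
lemma eL_encode (t : List ℕ) : eL (encode t) = t := by simp [eL]

abbrev X := List ℕ × List ℕ × List ℕ
noncomputable def dX : ℕ → X := Denumerable.ofNat X
lemma dX_encode (x : X) : dX (encode x) = x := Denumerable.ofNat_encode x

/-- lists `u,v,s` of length `n` are a plausible approximation: some total `α`
matches `u` on the first coordinates, `F α` vanishes on segments of `v`, and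
`α` vanishes on prefixes of `s`. -/
def Cond (F : (List ℕ → ℕ) → (List ℕ → ℕ)) (x : X) : Prop :=
  ∃ α : List ℕ → ℕ,
    (∀ j < x.1.length, α (eL j) = x.1.getD j 0) ∧
    (∀ i ≤ x.2.1.length, F α (seg (fun j => x.2.1.getD j 0) i) = 0) ∧
    (∀ i ≤ x.2.2.length, α (x.2.2.take i) = 0)

def Rel (F : (List ℕ → ℕ) → (List ℕ → ℕ)) (x' x : X) : Prop :=
  (∃ a, x'.1 = x.1 ++ [a]) ∧ (∃ b, x'.2.1 = x.2.1 ++ [b]) ∧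
    (∃ c, x'.2.2 = x.2.2 ++ [c]) ∧ Cond F x'

lemma getD_seg (f : ℕ → ℕ) {j n : ℕ} (h : j < n) : (seg f n).getD j 0 = f j := by
  rw [List.getD_eq_getElem]
  · simp [seg]
  · simpa [seg] using h

lemma seg_congr {f g : ℕ → ℕ} {i : ℕ} (h : ∀ j < i, f j = g j) : seg f i = seg g i :=
  List.map_congr_left (by simpa using h)

lemma seg_succ (f : ℕ → ℕ) (n : ℕ) : seg f (n + 1) = seg f n ++ [f n] := by
  simp [seg, List.range_succ]

lemma length_seg (f : ℕ → ℕ) (n : ℕ) : (seg f n).length = n := by simp [seg]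

/-- chains of lists growing by one element -/
lemma chain_len {u : ℕ → List ℕ} (h : ∀ n, ∃ a, u (n + 1) = u n ++ [a]) :
    ∀ n, n ≤ (u n).length := by
  intro n
  induction n with
  | zero => exact Nat.zero_le _
  | succ n ih =>
    obtain ⟨a, ha⟩ := h n
    simp [ha]; omega

lemma chain_getD {u : ℕ → List ℕ} (h : ∀ n, ∃ a, u (n + 1) = u n ++ [a]) :
    ∀ {m n j : ℕ}, m ≤ n → j < (u m).length → (u n).getD j 0 = (u m).getD j 0 := by
  intro m n j hmn hj
  induction n with
  | zero => interval_cases m; rfl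
  | succ n ih =>
    rcases Nat.lt_or_ge m (n + 1) with hlt | hge
    · obtain ⟨a, ha⟩ := h n
      have hmn' : m ≤ n := Nat.lt_succ_iff.mp hlt
      have hlen : (u m).length ≤ (u n).length := by
        have := ih hmn'
        -- length monotone
        clear ih
        have : ∀ k l, k ≤ l → (u k).length ≤ (u l).length := by
          intro k l hkl
          induction l with
          | zero => interval_cases k; rfl
          | succ l ihl =>
            obtain ⟨b, hb⟩ := h l
            rcases Nat.lt_or_ge k (l + 1) with h1 | h2
            · calc (u k).length ≤ (u l).length := ihl (Nat.lt_succ_iff.mp h1)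
                _ ≤ (u (l+1)).length := by simp [hb]
            · have : k = l + 1 := le_antisymm hkl h2
              simp [this]
        exact this m n hmn'
      rw [ha, List.getD_append _ _ _ _ (lt_of_lt_of_le hj hlen)]
      exact ih hmn'
    · have : m = n + 1 := le_antisymm hmn hge
      simp [this]

lemma no_descending {Y : Type*} {R : Y → Y → Prop} (wf : WellFounded R) (f : ℕ → Y)
    (h : ∀ n, R (f (n + 1)) (f n)) : False := by
  have key : ∀ x, ¬ ∃ g : ℕ → Y, g 0 = x ∧ ∀ n, R (g (n + 1)) (g n) := by
    intro x
    induction x using WellFounded.induction wf with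
    | _ x ih =>
      rintro ⟨g, rfl, hg⟩
      exact ih (g 1) (hg 0) ⟨fun n => g (n + 1), rfl, fun n => hg (n + 1)⟩
  exact key (f 0) ⟨f, rfl, h⟩

lemma wf_of_no_desc {Y : Type*} {R : Y → Y → Prop}
    (h : ∀ f : ℕ → Y, ¬ ∀ n, R (f (n + 1)) (f n)) : WellFounded R := by
  by_contra h'
  have hx : ∃ x, ¬ Acc R x := by
    by_contra hall
    push_neg at hall
    exact h' ⟨fun x => hall x⟩
  have step : ∀ x : {x // ¬ Acc R x}, ∃ y : {x // ¬ Acc R x}, R y.1 x.1 := by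
    rintro ⟨x, hx⟩
    by_contra hc
    push_neg at hc
    refine hx (Acc.intro x fun y hy => ?_)
    by_contra hy'
    exact hc ⟨y, hy'⟩ hy
  choose nxt hnxt using step
  obtain ⟨x0, hx0⟩ := hx
  refine h (fun n => (nxt^[n] ⟨x0, hx0⟩).1) fun n => ?_
  simp only [Function.iterate_succ_apply']
  exact hnxt _

/-- locality of a continuous `F` -/
lemma locally_determined {F : (List ℕ → ℕ) → (List ℕ → ℕ)} (hF : Continuous F)
    (α : List ℕ → ℕ) (z : List ℕ) :
    ∃ I : Finset (List ℕ), ∀ α', (∀ t ∈ I, α' t = α t) → F α' z = F α z := by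
  have hopen : IsOpen {α' : List ℕ → ℕ | F α' z = F α z} := by
    have : Continuous fun α' => F α' z := (continuous_apply z).comp hF
    exact this.isOpen_preimage {F α z} (isOpen_discrete _)
  obtain ⟨I, u, hu, hsub⟩ := isOpen_pi_iff.mp hopen α rfl
  refine ⟨I, fun α' hα' => hsub fun t ht => ?_⟩
  rw [hα' t ht]
  exact (hu t ht).2

lemma getD_take {l : List ℕ} {k j : ℕ} (h : j < (l.take k).length) :
    (l.take k).getD j 0 = l.getD j 0 := by
  have hj : j < l.length := lt_of_lt_of_le h (by simp [List.length_take])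
  rw [List.getD_eq_getElem _ _ h, List.getElem_take, List.getD_eq_getElem _ _ hj]

lemma wfRel {F : (List ℕ → ℕ) → (List ℕ → ℕ)} (hF : Continuous F)
    (hmaps : ∀ γ ∈ E11, F γ ∈ A11) : WellFounded (Rel F) := by
  refine wf_of_no_desc fun f hdesc => ?_
  set u : ℕ → List ℕ := fun n => (f n).1 with hu_def
  set v : ℕ → List ℕ := fun n => (f n).2.1 with hv_def
  set s : ℕ → List ℕ := fun n => (f n).2.2 with hs_def
  have hu : ∀ n, ∃ a, u (n + 1) = u n ++ [a] := fun n => (hdesc n).1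
  have hv : ∀ n, ∃ a, v (n + 1) = v n ++ [a] := fun n => (hdesc n).2.1
  have hs : ∀ n, ∃ a, s (n + 1) = s n ++ [a] := fun n => (hdesc n).2.2.1
  have hcond : ∀ n, Cond F (f (n + 1)) := fun n => (hdesc n).2.2.2
  choose A hA1 hA2 hA3 using hcond
  set αs : List ℕ → ℕ := fun t => (u (Encodable.encode t + 1)).getD (Encodable.encode t) 0
    with hαs_def
  have hastar : ∀ (t : List ℕ) (n : ℕ), Encodable.encode t < (u n).length →
      αs t = (u n).getD (Encodable.encode t) 0 := by
    intro t n hn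
    have h1 : Encodable.encode t < (u (Encodable.encode t + 1)).length :=
      lt_of_lt_of_le (Nat.lt_succ_self _) (chain_len hu _)
    have e1 : (u (max n (Encodable.encode t + 1))).getD (Encodable.encode t) 0
        = (u n).getD (Encodable.encode t) 0 := chain_getD hu (le_max_left _ _) hn
    have e2 : (u (max n (Encodable.encode t + 1))).getD (Encodable.encode t) 0
        = (u (Encodable.encode t + 1)).getD (Encodable.encode t) 0 :=
      chain_getD hu (le_max_right _ _) h1
    rw [hαs_def]
    dsimp only
    rw [← e2, e1]
  have hAagree : ∀ (n : ℕ) (t : List ℕ), Encodable.encode t < (u (n + 1)).length →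
      A n t = αs t := by
    intro n t ht
    have h1 := hA1 n (Encodable.encode t) ht
    rw [eL_encode] at h1
    rw [h1, hastar t (n + 1) ht]
  set βs : ℕ → ℕ := fun j => (v (j + 1)).getD j 0 with hβs_def
  have hvseg : ∀ (i n : ℕ), i ≤ (v n).length →
      seg βs i = seg (fun j => (v n).getD j 0) i := by
    intro i n hi
    refine seg_congr fun j hj => ?_
    have h1 : j < (v (j + 1)).length := lt_of_lt_of_le (Nat.lt_succ_self _) (chain_len hv _)
    have h2 : j < (v n).length := lt_of_lt_of_le hj hi
    have e1 : (v (max n (j + 1))).getD j 0 = (v n).getD j 0 :=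
      chain_getD hv (le_max_left _ _) h2
    have e2 : (v (max n (j + 1))).getD j 0 = (v (j + 1)).getD j 0 :=
      chain_getD hv (le_max_right _ _) h1
    rw [hβs_def]
    dsimp only
    rw [← e2, e1]
  have hFE : ∀ i, F αs (seg βs i) = 0 := by
    intro i
    obtain ⟨I, hI⟩ := locally_determined hF αs (seg βs i)
    set n := max (I.sup Encodable.encode) i with hn_def
    have hag : ∀ t ∈ I, A n t = αs t := by
      intro t ht
      refine hAagree n t (lt_of_lt_of_le ?_ (chain_len hu _))
      have h1 : Encodable.encode t ≤ I.sup Encodable.encode := Finset.le_sup ht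
      omega
    have h1 : F (A n) (seg βs i) = F αs (seg βs i) := hI (A n) hag
    have hvlen : i ≤ (v (n + 1)).length := le_trans (by omega : i ≤ n + 1) (chain_len hv _)
    have h2 : seg βs i = seg (fun j => (v (n + 1)).getD j 0) i := hvseg i (n + 1) hvlen
    have h3 := hA2 n i hvlen
    rw [← h2] at h3
    rw [← h1, h3]
  set βh : ℕ → ℕ := fun j => (s (j + 1)).getD j 0 with hβh_def
  have hseg_take : ∀ (k n : ℕ), k ≤ (s n).length → seg βh k = (s n).take k := by
    intro k n hk
    refine List.ext_getElem (by simp [length_seg, List.length_take]; omega) fun j h1 h2 => ?_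
    have hj : j < k := by simpa [length_seg] using h1
    have hjn : j < (s n).length := lt_of_lt_of_le hj hk
    have hj1 : j < (s (j + 1)).length := lt_of_lt_of_le (Nat.lt_succ_self _) (chain_len hs _)
    have e1 : (s (max n (j + 1))).getD j 0 = (s n).getD j 0 :=
      chain_getD hs (le_max_left _ _) hjn
    have e2 : (s (max n (j + 1))).getD j 0 = (s (j + 1)).getD j 0 :=
      chain_getD hs (le_max_right _ _) hj1
    have e3 : βh j = (s n).getD j 0 := by
      rw [hβh_def]; dsimp only; rw [← e2, e1]
    simp only [seg, List.getElem_map, List.getElem_range, List.getElem_take]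
    rw [e3, List.getD_eq_getElem _ _ hjn]
  have hAE : ∀ k, αs (seg βh k) = 0 := by
    intro k
    set n := max k (Encodable.encode (seg βh k)) with hn_def
    have hklen : k ≤ (s (n + 1)).length :=
      le_trans (by omega : k ≤ n + 1) (chain_len hs _)
    have h1 : seg βh k = (s (n + 1)).take k := hseg_take k (n + 1) hklen
    have h2 := hA3 n k hklen
    have h3 : Encodable.encode (seg βh k) < (u (n + 1)).length :=
      lt_of_lt_of_le (by omega : Encodable.encode (seg βh k) < n + 1) (chain_len hu _)
    have h4 := hAagree n (seg βh k) h3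
    rw [← h4, h1]
    exact h2
  obtain ⟨m, hm⟩ := hmaps αs ⟨βh, hAE⟩ βs
  exact hm (hFE m)

def Lseq (g : List ℕ → X) : ℕ → List ℕ
  | 0 => []
  | n + 1 => Lseq g n ++ [Encodable.encode (g (Lseq g n))]

lemma length_Lseq (g : List ℕ → X) : ∀ n, (Lseq g n).length = n
  | 0 => rfl
  | n + 1 => by simp [Lseq, length_Lseq g n]

lemma getD_Lseq (g : List ℕ → X) :
    ∀ n, ∀ i < n, (Lseq g n).getD i 0 = Encodable.encode (g (Lseq g i)) := by
  intro n
  induction n with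
  | zero => omega
  | succ n ih =>
    intro i hi
    rcases Nat.lt_or_ge i n with h | h
    · rw [Lseq, List.getD_append _ _ _ _ (by rw [length_Lseq]; exact h)]
      exact ih i h
    · have hin : i = n := by omega
      subst hin
      rw [Lseq, List.getD_append_right _ _ _ _ (le_of_eq (length_Lseq g i))]
      simp [length_Lseq]

end E11Red

/-- `E¹₁` positively fails to reduce to `A¹₁`: every continuous function
mapping `E¹₁` into `A¹₁` maps some element of `A¹₁` into `A¹₁`. -/
theorem E11_positively_fails_to_reduce_to_A11
    (F : (List ℕ → ℕ) → (List ℕ → ℕ)) (hF : Continuous F)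
    (hmaps : ∀ γ ∈ E11, F γ ∈ A11) :
    ∃ α, α ∈ A11 ∧ F α ∈ A11 := by
  classical
  open E11Red in
  by_contra hcontra
  push_neg at hcontra
  have H : ∀ α, α ∈ A11 → F α ∈ E11 := by
    intro α hα
    have h1 := hcontra α hα
    simp only [A11, Set.mem_setOf_eq] at h1
    push_neg at h1
    exact h1
  have wfR := E11Red.wfRel hF hmaps
  set T0 : List ℕ → Prop := fun l => ∀ i, i + 1 < l.length →
      E11Red.Rel F (E11Red.dX (l.getD (i + 1) 0)) (E11Red.dX (l.getD i 0)) with hT0_def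
  set α₀ : List ℕ → ℕ := fun l => if T0 l then 0 else 1 with hα₀_def
  have hT0_of : ∀ l, α₀ l = 0 → T0 l := by
    intro l hl
    by_contra hc
    rw [hα₀_def] at hl
    simp [hc] at hl
  have hof_T0 : ∀ l, T0 l → α₀ l = 0 := by
    intro l hl
    rw [hα₀_def]
    exact if_pos hl
  have hT0_take : ∀ l, T0 l → ∀ k, T0 (l.take k) := by
    intro l hl k i hi
    have hlen : (l.take k).length ≤ l.length := by simp [List.length_take]
    have hi1 : i + 1 < l.length := lt_of_lt_of_le hi hlen
    rw [E11Red.getD_take hi, E11Red.getD_take (by omega : i < (l.take k).length)]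
    exact hl i hi1
  have hA0 : α₀ ∈ A11 := by
    intro β
    by_contra hβ
    push_neg at hβ
    have hall : ∀ n, T0 (seg β n) := fun n => hT0_of _ (hβ n)
    refine E11Red.no_descending wfR (fun n => E11Red.dX (β n)) fun n => ?_
    have h2 := hall (n + 2) n (by rw [E11Red.length_seg]; omega)
    rwa [E11Red.getD_seg β (by omega), E11Red.getD_seg β (by omega)] at h2
  obtain ⟨β₀, hβ₀⟩ := H α₀ hA0
  set g : List ℕ → E11Red.X :=
    fun l => (seg (fun j => α₀ (E11Red.eL j)) l.length, seg β₀ l.length, l) with hg_def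
  have embed : ∀ l a, T0 (l ++ [a]) → E11Red.Rel F (g (l ++ [a])) (g l) := by
    intro l a hla
    have hlen : (l ++ [a]).length = l.length + 1 := by simp
    refine ⟨⟨α₀ (E11Red.eL l.length), ?_⟩, ⟨β₀ l.length, ?_⟩, ⟨a, rfl⟩, ?_⟩
    · rw [hg_def]; dsimp only; rw [hlen, E11Red.seg_succ]
    · rw [hg_def]; dsimp only; rw [hlen, E11Red.seg_succ]
    · refine ⟨α₀, ?_, ?_, ?_⟩
      · intro j hj
        rw [hg_def] at hj ⊢
        dsimp only at hj ⊢
        rw [E11Red.length_seg] at hj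
        rw [E11Red.getD_seg _ hj]
      · intro i hi
        rw [hg_def] at hi ⊢
        dsimp only at hi ⊢
        rw [E11Red.length_seg] at hi
        have h2 : seg (fun j => (seg β₀ (l ++ [a]).length).getD j 0) i = seg β₀ i :=
          E11Red.seg_congr fun j hj => E11Red.getD_seg β₀ (lt_of_lt_of_le hj hi)
        rw [h2]
        exact hβ₀ i
      · intro i _
        exact hof_T0 _ (hT0_take _ hla i)
  have hK : ∀ n, T0 (E11Red.Lseq g n) := by
    intro n
    induction n using Nat.strong_induction_on with
    | _ n ih =>
      intro i hi
      rw [E11Red.length_Lseq] at hi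
      rw [E11Red.getD_Lseq g n (i + 1) (by omega), E11Red.getD_Lseq g n i (by omega),
        E11Red.dX_encode, E11Red.dX_encode]
      exact embed _ _ (ih (i + 1) (by omega))
  exact absurd (fun n => embed (E11Red.Lseq g (n + 1)) _ (hK (n + 2)))
    (fun h => E11Red.no_descending wfR (fun n => g (E11Red.Lseq g (n + 1))) h)
end

section
/- Cantor diagonal for well-founded tree codes: for every continuous F : (ℕ → ℕ) → (List ℕ → ℕ) such that F β ∈ A¹₁ for every β, there exists α ∈ A¹₁ such that α is apart from every F β, i.e., for every β there is a list s with α s ≠ (F β) s. In particular A¹₁ is not the range of any continuous function on Baire space. -/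
namespace CDA


lemma length_seg (β : ℕ → ℕ) (n : ℕ) : (seg β n).length = n := by simp [seg]

lemma getElem_seg (β : ℕ → ℕ) {n i : ℕ} (h : i < (seg β n).length) : (seg β n)[i] = β i := by
  simp [seg]

lemma getD_seg (β : ℕ → ℕ) {n i : ℕ} (h : i < n) : (seg β n).getD i 0 = β i := by
  rw [List.getD_eq_getElem _ _ (by simpa [length_seg] using h)]
  exact getElem_seg β (by simpa [length_seg] using h)

lemma seg_prefix_seg (β : ℕ → ℕ) {m n : ℕ} (h : m ≤ n) : seg β m <+: seg β n := by
  rw [List.prefix_iff_eq_take, length_seg]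
  simp [seg, ← List.map_take, List.take_range, Nat.min_eq_left h]

lemma getD_prefix {l₁ l₂ : List ℕ} (h : l₁ <+: l₂) {i : ℕ} (hi : i < l₁.length) :
    l₂.getD i 0 = l₁.getD i 0 := by
  obtain ⟨r, rfl⟩ := h
  exact List.getD_append _ _ _ _ hi

lemma seg_append_drop (β : ℕ → ℕ) {a b : ℕ} (h : a ≤ b) :
    seg β a ++ (seg β b).drop a = seg β b := by
  conv_rhs => rw [← List.take_append_drop a (seg β b)]
  congr 1
  simp [seg, ← List.map_take, List.take_range, Nat.min_eq_left h]

def ext (s : List ℕ) : ℕ → ℕ := fun n => s.getD n 0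

lemma ext_seg (β : ℕ → ℕ) {L i : ℕ} (h : i < L) : ext (seg β L) i = β i := getD_seg β h

lemma seg_ext (β : ℕ → ℕ) {K L : ℕ} (h : K ≤ L) : seg (ext (seg β L)) K = seg β K := by
  apply List.ext_getElem (by simp [length_seg])
  intro i h1 h2
  rw [getElem_seg, getElem_seg]
  exact ext_seg β (lt_of_lt_of_le (by simpa [length_seg] using h1) h)

lemma seg_succ_cons (β : ℕ → ℕ) (n : ℕ) :
    seg β (n + 1) = β 0 :: seg (fun i => β (i + 1)) n := by
  simp [seg, List.range_succ_eq_map, List.map_map]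

lemma exists_modulus {F : (ℕ → ℕ) → List ℕ → ℕ} (hF : Continuous F) (β : ℕ → ℕ)
    (u : List ℕ) : ∃ n, ∀ β', seg β' n = seg β n → F β' u = F β u := by
  have hc : Continuous fun β' => F β' u := (continuous_apply u).comp hF
  have ho : IsOpen {β' : ℕ → ℕ | F β' u = F β u} :=
    (isOpen_discrete ({F β u} : Set ℕ)).preimage hc
  rw [isOpen_pi_iff] at ho
  obtain ⟨I, U, hIU, hsub⟩ := ho β rfl
  refine ⟨I.sup id + 1, fun β' hβ' => ?_⟩
  apply hsub
  rw [Set.mem_pi]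
  intro i hi
  have hlt : i < I.sup id + 1 := Nat.lt_succ_of_le (Finset.le_sup (f := id) hi)
  have : β' i = β i := by
    have h2 : (seg β' (I.sup id + 1)).getD i 0 = (seg β (I.sup id + 1)).getD i 0 :=
      congrArg (fun l => l.getD i 0) hβ'
    rwa [getD_seg _ hlt, getD_seg _ hlt] at h2
  rw [this]
  exact (hIU i hi).2

noncomputable section
open Classical


def dec (z : ℕ) : List ℕ × ℕ := Denumerable.ofNat _ z
def enc (p : List ℕ × ℕ) : ℕ := Encodable.encode p

lemma dec_enc (p : List ℕ × ℕ) : dec (enc p) = p := Denumerable.ofNat_encode p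

def Bb (t : List ℕ) : List ℕ := (t.map fun z => (dec z).1).flatten
def Xx (t : List ℕ) : List ℕ := t.map fun z => (dec z).2

lemma Bb_append (s t : List ℕ) : Bb (s ++ t) = Bb s ++ Bb t := by
  simp [Bb]

lemma Bb_prefix {s t : List ℕ} (h : s <+: t) : Bb s <+: Bb t := by
  obtain ⟨r, rfl⟩ := h
  rw [Bb_append]; exact List.prefix_append _ _

/-- the local condition on nodes of the master tree -/
def cond1 (F : (ℕ → ℕ) → List ℕ → ℕ) (t : List ℕ) : Prop :=
  t ≠ [] → ∀ u, u <+: Xx t → F (ext (Bb t)) u = 0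

def Wset (F : (ℕ → ℕ) → List ℕ → ℕ) : Set (List ℕ) :=
  {t | ∀ t', t' <+: t → cond1 F t'}

def Zset (F : (ℕ → ℕ) → List ℕ → ℕ) : Set (List ℕ) :=
  {s | s = [] ∨ ∃ k t, s = k :: t ∧ t ∈ Wset F}

def alphaF (F : (ℕ → ℕ) → List ℕ → ℕ) : List ℕ → ℕ :=
  fun s => if s ∈ Zset F then 0 else 1

lemma Wset_closed {F} {t t' : List ℕ} (h : t ∈ Wset F) (h' : t' <+: t) : t' ∈ Wset F :=
  fun t'' h'' => h t'' (h''.trans h')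

lemma Zset_closed {F} {s s' : List ℕ} (h : s ∈ Zset F) (h' : s' <+: s) : s' ∈ Zset F := by
  rcases h with h | ⟨k, t, rfl, hw⟩
  · subst h; rw [List.prefix_nil] at h'; exact Or.inl h'
  · match s', h' with
    | [], _ => exact Or.inl rfl
    | a :: l, h' =>
      obtain ⟨h1, h2⟩ := List.cons_prefix_cons.1 h'
      exact Or.inr ⟨a, l, rfl, Wset_closed hw h2⟩

/-- no infinite path through the master tree -/
lemma no_path {F : (ℕ → ℕ) → List ℕ → ℕ} (hF : Continuous F) (hmem : ∀ b, F b ∈ A11)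
    (g : ℕ → ℕ) (h : ∀ m, cond1 F (seg g m)) : False := by
  set x : ℕ → ℕ := fun n => (dec (g n)).2 with hx
  have hXx : ∀ m, Xx (seg g m) = seg x m := by
    intro m; simp [Xx, seg, List.map_map]; intro a _; rfl
  set Bm : ℕ → List ℕ := fun m => Bb (seg g m) with hBm
  have hBmono : ∀ {m m'}, m ≤ m' → Bm m <+: Bm m' :=
    fun h' => Bb_prefix (seg_prefix_seg g h')
  set L : ℕ → ℕ := fun m => (Bm m).length with hL
  have hLmono : ∀ {m m'}, m ≤ m' → L m ≤ L m' := fun h' => (hBmono h').length_le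
  set bs : ℕ → ℕ := fun i => if h : ∃ m, i < L m then (Bm h.choose).getD i 0 else 0 with hbs
  have key : ∀ m i, i < L m → (Bm m).getD i 0 = bs i := by
    intro m i him
    have hex : ∃ m', i < L m' := ⟨m, him⟩
    rw [hbs]
    simp only [dif_pos hex]
    rcases le_total hex.choose m with hc | hc
    · exact getD_prefix (hBmono hc) hex.choose_spec
    · exact (getD_prefix (hBmono hc) him).symm
  have agree : ∀ M K, ∃ m, M ≤ m ∧ 1 ≤ m ∧ ∀ i, i < K → ext (Bm m) i = bs i := by
    intro M K
    set wit : ℕ → ℕ := fun i => if h : ∃ m, i < L m then h.choose else 0 with hwit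
    refine ⟨M + 1 + (Finset.range K).sup wit, by omega, by omega, ?_⟩
    intro i hiK
    by_cases hex : ∃ m, i < L m
    · have h2 : wit i ≤ (Finset.range K).sup wit := Finset.le_sup (Finset.mem_range.2 hiK)
      have h1 : wit i = hex.choose := dif_pos hex
      have h3 : i < L (M + 1 + (Finset.range K).sup wit) :=
        lt_of_lt_of_le hex.choose_spec (hLmono (by omega))
      exact key _ i h3
    · push_neg at hex
      have h1 : bs i = 0 := by
        rw [hbs]
        simp only
        rw [dif_neg (by push_neg; exact hex)]
      rw [h1]
      exact List.getD_eq_default _ _ (hex _)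
  have hzero : ∀ M, F bs (seg x M) = 0 := by
    intro M
    obtain ⟨K, hK⟩ := exists_modulus hF bs (seg x M)
    obtain ⟨m, hMm, h1m, hag⟩ := agree M K
    have hseg : seg (ext (Bm m)) K = seg bs K := by
      apply List.ext_getElem (by simp [length_seg])
      intro i hi1 hi2
      rw [getElem_seg, getElem_seg]
      exact hag i (by simpa [length_seg] using hi1)
    rw [← hK (ext (Bm m)) hseg]
    have hne : seg g m ≠ [] := by
      intro hc
      have := congrArg List.length hc
      rw [length_seg] at this
      simp at this; omega
    exact h m hne (seg x M) (by rw [hXx m]; exact seg_prefix_seg x hMm)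
  obtain ⟨n, hn⟩ := hmem bs x
  exact hn (hzero n)

lemma alphaF_mem {F : (ℕ → ℕ) → List ℕ → ℕ} (hF : Continuous F) (hmem : ∀ b, F b ∈ A11) :
    alphaF F ∈ A11 := by
  intro b
  by_contra hc
  push_neg at hc
  have hZ : ∀ n, seg b n ∈ Zset F := by
    intro n
    by_contra hz
    have := hc n
    rw [alphaF, if_neg hz] at this
    exact one_ne_zero this
  have hW : ∀ n, seg (fun i => b (i + 1)) n ∈ Wset F := by
    intro n
    have h1 := hZ (n + 1)
    rw [seg_succ_cons] at h1
    rcases h1 with h0 | ⟨k, t, het, hw⟩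
    · exact absurd h0 (by simp)
    · rw [List.cons.injEq] at het
      rw [het.2]
      exact hw
  exact no_path hF hmem (fun i => b (i + 1))
    (fun m => (hW m) _ (List.prefix_refl _))


section
variable {F : (ℕ → ℕ) → List ℕ → ℕ} (hF : Continuous F) (β : ℕ → ℕ)

/-- modulus of continuity -/
def Mod (u : List ℕ) : ℕ := (exists_modulus hF β u).choose

lemma Mod_spec (u : List ℕ) : ∀ β', seg β' (Mod hF β u) = seg β (Mod hF β u) →
    F β' u = F β u := (exists_modulus hF β u).choose_spec

lemma le_foldr_max {l : List ℕ} {a : ℕ} (h : a ∈ l) : a ≤ l.foldr max 0 := by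
  induction l with
  | nil => simp at h
  | cons b l ih =>
    rcases List.mem_cons.1 h with rfl | h
    · exact le_max_left _ _
    · exact le_trans (ih h) (le_max_right _ _)

lemma foldr_max_le {l : List ℕ} {B : ℕ} (h : ∀ a ∈ l, a ≤ B) : l.foldr max 0 ≤ B := by
  induction l with
  | nil => simp
  | cons b l ih => simpa using ⟨h b (by simp), ih fun a ha => h a (by simp [ha])⟩

/-- running maximum of moduli over prefixes -/
def Nf (s : List ℕ) : ℕ := (s.inits.map (Mod hF β)).foldr max 0

lemma Mod_le_Nf {u s : List ℕ} (h : u <+: s) : Mod hF β u ≤ Nf hF β s :=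
  le_foldr_max (List.mem_map_of_mem ((List.mem_inits _ _).2 h))

lemma Nf_mono {u s : List ℕ} (h : u <+: s) : Nf hF β u ≤ Nf hF β s := by
  apply foldr_max_le
  intro a ha
  obtain ⟨v, hv, rfl⟩ := List.mem_map.1 ha
  exact Mod_le_Nf hF β (((List.mem_inits _ _).1 hv).trans h)

def Nf0 (s : List ℕ) : ℕ := if s = [] then 0 else Nf hF β s

lemma Nf0_le {s : List ℕ} {k : ℕ} : Nf0 hF β s ≤ Nf hF β (s ++ [k]) := by
  rw [Nf0]
  split
  · exact Nat.zero_le _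
  · exact Nf_mono hF β (List.prefix_append _ _)

def entE (s : List ℕ) (i : ℕ) : ℕ :=
  enc ((seg β (Nf hF β (s.take (i + 1)))).drop (Nf0 hF β (s.take i)), s.getD i 0)

def eE (s : List ℕ) : List ℕ := (List.range s.length).map (entE hF β s)

lemma length_eE (s : List ℕ) : (eE hF β s).length = s.length := by simp [eE]

lemma entE_congr {s t : List ℕ} {i : ℕ} (hs : i < s.length)
    (h : s.take (i + 1) = t.take (i + 1)) : entE hF β s i = entE hF β t i := by
  have h0 : s.take i = t.take i := by
    have hs' : s.take i = (s.take (i + 1)).take i := by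
      rw [List.take_take, Nat.min_eq_left (Nat.le_succ i)]
    have ht' : t.take i = (t.take (i + 1)).take i := by
      rw [List.take_take, Nat.min_eq_left (Nat.le_succ i)]
    rw [hs', ht', h]
  have h1 : s.getD i 0 = t.getD i 0 := by
    have hp : s.take (i + 1) <+: s := List.take_prefix _ _
    have hq : t.take (i + 1) <+: t := List.take_prefix _ _
    have hl : i < (s.take (i + 1)).length := by
      rw [List.length_take]; omega
    rw [getD_prefix hp hl, getD_prefix hq (h ▸ hl), h]
  rw [entE, entE, h, h0, h1]

lemma eE_take (s : List ℕ) {j : ℕ} (hj : j ≤ s.length) :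
    eE hF β (s.take j) = (eE hF β s).take j := by
  rw [eE, eE, ← List.map_take, List.take_range, List.length_take,
    Nat.min_eq_left hj]
  apply List.map_congr_left
  intro i hi
  rw [List.mem_range] at hi
  exact entE_congr hF β (by rw [List.length_take]; omega)
    (by rw [List.take_take, Nat.min_eq_left hi])

lemma eE_prefix {u s : List ℕ} (h : u <+: s) : eE hF β u <+: eE hF β s := by
  have := List.prefix_iff_eq_take.1 h
  rw [this, eE_take hF β s h.length_le]
  exact List.take_prefix _ _

lemma Xx_eE (s : List ℕ) : Xx (eE hF β s) = s := by
  rw [Xx, eE, List.map_map]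
  apply List.ext_getElem (by simp)
  intro i h1 h2
  simp only [List.getElem_map, List.getElem_range, Function.comp_apply, entE, dec_enc]
  exact List.getD_eq_getElem s 0 h2

lemma Bb_eE (s : List ℕ) : Bb (eE hF β s) = seg β (Nf0 hF β s) := by
  induction s using List.reverseRecOn with
  | nil => simp [eE, Bb, Nf0, seg]
  | append_singleton s k ih =>
    have hsplit : eE hF β (s ++ [k]) = eE hF β s ++ [entE hF β (s ++ [k]) s.length] := by
      rw [eE, List.length_append, List.length_singleton, List.range_succ, List.map_append,
        List.map_singleton]
      congr 1
      rw [eE]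
      apply List.map_congr_left
      intro i hi
      rw [List.mem_range] at hi
      exact (entE_congr hF β hi
        (by rw [List.take_append_of_le_length (by omega)])).symm
    rw [hsplit, Bb_append, ih]
    have hBsing : ∀ z, Bb [z] = (dec z).1 := by intro z; simp [Bb]
    rw [hBsing, entE, dec_enc]
    simp only
    have h1 : (s ++ [k]).take (s.length + 1) = s ++ [k] := by
      apply List.take_of_length_le; simp
    have h2 : (s ++ [k]).take s.length = s := by
      rw [List.take_append_of_le_length le_rfl, List.take_length]
    rw [h1, h2, seg_append_drop β (Nf0_le hF β)]
    rw [Nf0, if_neg (by simp)]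


lemma eE_mem_W {u : List ℕ} (hu : ∀ v, v <+: u → F β v = 0) : eE hF β u ∈ Wset F := by
  intro t' ht'
  have hlen : t'.length ≤ u.length := by
    have := ht'.length_le
    rwa [length_eE] at this
  have hrep : t' = eE hF β (u.take t'.length) :=
    (List.prefix_iff_eq_take.1 ht').trans (eE_take hF β u hlen).symm
  set w := u.take t'.length with hwdef
  have hwp : w <+: u := List.take_prefix _ _
  have hwu : ∀ v, v <+: w → F β v = 0 := fun v hv => hu v (hv.trans hwp)
  rw [hrep]
  intro hne v hv
  have hwne : w ≠ [] := by
    intro h0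
    apply hne
    rw [h0]
    rfl
  rw [Xx_eE] at hv
  rw [Bb_eE, Nf0, if_neg hwne]
  rw [Mod_spec hF β v (ext (seg β (Nf hF β w))) (seg_ext β (Mod_le_Nf hF β hv))]
  exact hwu v hv
end

end
end CDA

open CDA in
/-- Cantor's diagonal argument for well-founded tree codes: every continuous
family of elements of `A¹₁` misses some element of `A¹₁`; in particular `A¹₁`
is not the range of a continuous function on Baire space. -/
theorem cantor_diagonal_A11 :
    (∀ F : (ℕ → ℕ) → (List ℕ → ℕ), Continuous F → (∀ β, F β ∈ A11) →
      ∃ α ∈ A11, ∀ β : ℕ → ℕ, ∃ s : List ℕ, α s ≠ F β s) ∧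
    ¬ ∃ G : (ℕ → ℕ) → (List ℕ → ℕ), Continuous G ∧ Set.range G = A11 := by
  have main : ∀ F : (ℕ → ℕ) → (List ℕ → ℕ), Continuous F → (∀ β, F β ∈ A11) →
      ∃ α ∈ A11, ∀ β : ℕ → ℕ, ∃ s : List ℕ, α s ≠ F β s := by
    intro F hF hmem
    refine ⟨alphaF F, alphaF_mem hF hmem, ?_⟩
    intro b
    by_contra hcon
    push_neg at hcon
    have hZ1 : ∀ s ∈ Zset F, ∀ v, v <+: s → F b v = 0 := by
      intro s hs v hv
      rw [← hcon v, alphaF, if_pos (Zset_closed hs hv)]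
    have hZ2 : ∀ v, v <+: ([] : List ℕ) → F b v = 0 := by
      intro v hv
      rw [List.prefix_nil] at hv
      subst hv
      exact hZ1 [] (Or.inl rfl) [] (List.prefix_refl _)
    let c : ℕ → List ℕ := fun n => Nat.rec [] (fun _ ih => 0 :: eE hF b ih) n
    have hcs : ∀ n, c (n + 1) = 0 :: eE hF b (c n) := fun n => rfl
    have hcT : ∀ n, ∀ v, v <+: c n → F b v = 0 := by
      intro n
      induction n with
      | zero => exact hZ2
      | succ n ih =>
        intro v hv
        refine hZ1 (c (n + 1)) ?_ v hv
        rw [hcs]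
        exact Or.inr ⟨0, eE hF b (c n), rfl, eE_mem_W hF b ih⟩
    have hlen : ∀ n, (c n).length = n := by
      intro n
      induction n with
      | zero => rfl
      | succ n ih => rw [hcs]; simp [length_eE, ih]
    have hchain : ∀ n, c n <+: c (n + 1) := by
      intro n
      induction n with
      | zero => exact List.nil_prefix
      | succ n ih =>
        rw [hcs n, hcs (n + 1)]
        exact List.cons_prefix_cons.2 ⟨rfl, eE_prefix hF b ih⟩
    have hmono : ∀ {m n : ℕ}, m ≤ n → c m <+: c n := by
      intro m n h
      induction h with
      | refl => exact List.prefix_refl _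
      | step h2 ih => exact ih.trans (hchain _)
    set bp : ℕ → ℕ := fun i => (c (i + 1)).getD i 0 with hbp
    have hseg : ∀ n, seg bp n = c n := by
      intro n
      apply List.ext_getElem (by rw [length_seg, hlen])
      intro i h1 h2
      rw [getElem_seg]
      have hi : i < n := by rwa [length_seg] at h1
      have hp : c (i + 1) <+: c n := hmono hi
      have he : (c n).getD i 0 = (c (i + 1)).getD i 0 :=
        getD_prefix hp (by rw [hlen (i + 1)]; omega)
      rw [hbp]
      simp only
      rw [← he]
      exact List.getD_eq_getElem (c n) 0 h2
    obtain ⟨n, hn⟩ := hmem b bp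
    exact hn (by rw [hseg]; exact hcT n (c n) (List.prefix_refl _))
  refine ⟨main, ?_⟩
  rintro ⟨G, hG, hrange⟩
  obtain ⟨α, hα, hap⟩ := main G hG (fun b => hrange ▸ Set.mem_range_self b)
  rw [← hrange] at hα
  obtain ⟨b, hb⟩ := hα
  obtain ⟨s, hs⟩ := hap b
  exact hs (congrFun hb s).symm
end

section
/- Lusin separation for continuous functions: if f, g : (ℕ → ℕ) → (ℕ → ℕ) are continuous and f α ≠ g β for all α, β, then there exist Borel sets B₀, B₁ ⊆ (ℕ → ℕ) with B₀ ∩ B₁ = ∅, range f ⊆ B₀, and range g ⊆ B₁. -/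
/-- Lusin separation for continuous functions: if the ranges of two continuous
functions on Baire space are disjoint, they can be separated by disjoint Borel
sets. -/
theorem lusin_separation (f g : (ℕ → ℕ) → (ℕ → ℕ))
    (hf : Continuous f) (hg : Continuous g)
    (hsep : ∀ α β, f α ≠ g β) :
    ∃ B₀ B₁ : Set (ℕ → ℕ), MeasurableSet B₀ ∧ MeasurableSet B₁ ∧
      B₀ ∩ B₁ = ∅ ∧ Set.range f ⊆ B₀ ∧ Set.range g ⊆ B₁ := by
  have hdisj : Disjoint (Set.range f) (Set.range g) := by
    rw [Set.disjoint_iff_forall_ne]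
    rintro _ ⟨a, rfl⟩ _ ⟨b, rfl⟩
    exact hsep a b
  obtain ⟨B, hfB, hgB, hBmeas⟩ :=
    MeasureTheory.measurablySeparable_range_of_disjoint hf hg hdisj
  exact ⟨B, Bᶜ, hBmeas, hBmeas.compl, by simp,
    hfB, fun x hx => Set.disjoint_left.1 hgB hx⟩
end

section
/- The set E₂! is the range of a continuous injective function from Baire space: there exists a continuous injective F : (ℕ → ℕ) → (ℕ → ℕ → ℕ) whose range is exactly the set of all α : ℕ → ℕ → ℕ such that for exactly one k, α k is the zero function (that is, ∃k, (∀p, α k p = 0) ∧ ∀m ≠ k, ∃p, α m p ≠ 0). -/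
/-- The set `E₂!`: exactly one subsequence is identically zero. -/
def E2bang : Set (ℕ → ℕ → ℕ) :=
  {α | ∃ k, (∀ p, α k p = 0) ∧ ∀ m, m ≠ k → ∃ p, α m p ≠ 0}

/-- Decode a sequence `δ` into a nonzero sequence: zeros up to position `δ 0`,
then `δ 1 + 1`, then the tail of `δ`. -/
def gg (δ : ℕ → ℕ) (p : ℕ) : ℕ :=
  if p < δ 0 then 0 else if p = δ 0 then δ 1 + 1 else δ (p - δ 0 + 1)

/-- The coding function. -/
def FF (β : ℕ → ℕ) (m p : ℕ) : ℕ :=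
  if m = β 0 then 0
  else gg (fun q => β (Nat.pair (if m < β 0 then m else m - 1) q + 1)) p

lemma gg_zero (δ : ℕ → ℕ) : gg δ (δ 0) = δ 1 + 1 := by simp [gg]

lemma gg_inj {δ δ' : ℕ → ℕ} (h : ∀ p, gg δ p = gg δ' p) : δ = δ' := by
  have h0 : δ 0 = δ' 0 := by
    by_contra hne
    rcases Nat.lt_or_ge (δ 0) (δ' 0) with hlt | hge
    · have := h (δ 0)
      rw [gg_zero] at this
      simp [gg, hlt] at this
    · have hlt : δ' 0 < δ 0 := lt_of_le_of_ne hge (Ne.symm hne)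
      have := h (δ' 0)
      rw [gg_zero] at this
      simp [gg, hlt] at this
  have h1 : δ 1 = δ' 1 := by
    have := h (δ 0)
    rw [gg_zero, h0, gg_zero] at this
    omega
  funext q
  match q with
  | 0 => exact h0
  | 1 => exact h1
  | (r+2) =>
    have hp := h (δ 0 + r + 1)
    simp only [gg, ← h0] at hp
    have c1 : ¬ (δ 0 + r + 1 < δ 0) := by omega
    have c2 : ¬ (δ 0 + r + 1 = δ 0) := by omega
    have c3 : δ 0 + r + 1 - δ 0 + 1 = r + 2 := by omega
    rw [if_neg c1, if_neg c2, if_neg c1, if_neg c2, c3] at hp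
    exact hp

lemma FF_row_zero (β : ℕ → ℕ) (p : ℕ) : FF β (β 0) p = 0 := by simp [FF]

lemma FF_row_ne (β : ℕ → ℕ) {m : ℕ} (hm : m ≠ β 0) : ∃ p, FF β m p ≠ 0 := by
  refine ⟨β (Nat.pair (if m < β 0 then m else m - 1) 0 + 1), ?_⟩
  have := gg_zero (fun q => β (Nat.pair (if m < β 0 then m else m - 1) q + 1))
  simp only [FF, if_neg hm]
  rw [this]
  omega

lemma ev_eq (i : ℕ) (β₀ : ℕ → ℕ) : ∀ᶠ β in nhds β₀, β i = β₀ i := by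
  have ho : IsOpen ((fun β : ℕ → ℕ => β i) ⁻¹' {β₀ i}) :=
    (isOpen_discrete ({β₀ i} : Set ℕ)).preimage (continuous_apply i)
  exact (ho.eventually_mem (Set.mem_singleton (β₀ i))).mono fun β hb => hb

lemma FF_cont : Continuous FF := by
  refine continuous_pi fun m => continuous_pi fun p => ?_
  rw [continuous_iff_continuousAt]
  intro β₀
  set i₀ := if m < β₀ 0 then m else m - 1 with hi₀
  set n₀ := β₀ (Nat.pair i₀ 0 + 1) with hn₀
  have E := (ev_eq 0 β₀).and ((ev_eq (Nat.pair i₀ 0 + 1) β₀).and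
    ((ev_eq (Nat.pair i₀ 1 + 1) β₀).and (ev_eq (Nat.pair i₀ (p - n₀ + 1) + 1) β₀)))
  have hcongr : (fun β => FF β m p) =ᶠ[nhds β₀] fun _ => FF β₀ m p := by
    filter_upwards [E] with β ⟨h0, h1, h2, h3⟩
    simp only [FF, h0, ← hi₀]
    by_cases hm : m = β₀ 0
    · simp [hm]
    · rw [if_neg hm, if_neg hm]
      simp only [gg, h1, ← hn₀]
      by_cases c1 : p < n₀
      · rw [if_pos c1, if_pos c1]
      · rw [if_neg c1, if_neg c1]
        by_cases c2 : p = n₀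
        · rw [if_pos c2, if_pos c2, h2]
        · rw [if_neg c2, if_neg c2, h3]
  exact ContinuousAt.congr (continuousAt_const) hcongr.symm

/-- `E₂!` is the range of a continuous injective function from Baire space. -/
theorem E2bang_is_injective_continuous_image :
    ∃ F : (ℕ → ℕ) → (ℕ → ℕ → ℕ), Continuous F ∧ Function.Injective F ∧
      Set.range F = E2bang := by
  classical
  refine ⟨FF, FF_cont, ?_, ?_⟩
  · -- injectivity
    intro β β' hFF
    have hk : β 0 = β' 0 := by
      by_contra hne
      obtain ⟨p, hp⟩ := FF_row_ne β (m := β' 0) (Ne.symm hne)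
      exact hp (by rw [hFF]; exact FF_row_zero β' p)
    funext j
    cases j with
    | zero => exact hk
    | succ j =>
      set i := (Nat.unpair j).1 with hi
      set q := (Nat.unpair j).2 with hq
      set m := if i < β 0 then i else i + 1 with hm'
      have hm : m ≠ β 0 := by rw [hm']; split <;> omega
      have hidx : (if m < β 0 then m else m - 1) = i := by
        rw [hm']
        by_cases h : i < β 0
        · rw [if_pos h, if_pos h]
        · rw [if_neg h]
          have : ¬ (i + 1 < β 0) := by omega
          rw [if_neg this]
          omega
      have hδ : (fun q => β (Nat.pair i q + 1)) = (fun q => β' (Nat.pair i q + 1)) := by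
        apply gg_inj
        intro p
        have hrow : FF β m p = FF β' m p := by rw [hFF]
        simp only [FF, ← hk, if_neg hm, hidx] at hrow
        exact hrow
      have := congrFun hδ q
      rw [hi, hq, Nat.pair_unpair] at this
      exact this
  · -- range
    ext α
    constructor
    · rintro ⟨β, rfl⟩
      exact ⟨β 0, fun p => FF_row_zero β p, fun m hm => FF_row_ne β hm⟩
    · rintro ⟨k, h1, h2⟩
      set d : ℕ → ℕ → ℕ := fun m q =>
        if hm : m ≠ k then
          if q = 0 then Nat.find (h2 m hm)
          else if q = 1 then α m (Nat.find (h2 m hm)) - 1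
          else α m (Nat.find (h2 m hm) + q - 1)
        else 0 with hd
      set β : ℕ → ℕ := fun j =>
        match j with
        | 0 => k
        | j+1 => d (if (Nat.unpair j).1 < k then (Nat.unpair j).1 else (Nat.unpair j).1 + 1)
            (Nat.unpair j).2 with hβ
      have hβ0 : β 0 = k := rfl
      refine ⟨β, ?_⟩
      funext m p
      by_cases hm : m = k
      · rw [hm, ← hβ0, FF_row_zero, hβ0]
        exact (h1 p).symm
      · have hm' : m ≠ β 0 := by rw [hβ0]; exact hm
        set i := if m < k then m else m - 1 with hi
        have hii : (if m < β 0 then m else m - 1) = i := by rw [hβ0]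
        have hinv : (if i < k then i else i + 1) = m := by
          rw [hi]
          by_cases h : m < k
          · rw [if_pos h, if_pos h]
          · rw [if_neg h]
            have h1' : ¬ (m - 1 < k) := by omega
            rw [if_neg h1']
            omega
        have hδval : ∀ q, β (Nat.pair i q + 1) = d m q := by
          intro q
          show d (if (Nat.unpair (Nat.pair i q)).1 < k then (Nat.unpair (Nat.pair i q)).1
            else (Nat.unpair (Nat.pair i q)).1 + 1) (Nat.unpair (Nat.pair i q)).2 = d m q
          rw [Nat.unpair_pair]
          simp only
          rw [hinv]
        rw [FF, if_neg hm', hii]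
        set n := Nat.find (h2 m hm) with hn
        have hdm : ∀ q, d m q = if q = 0 then n else if q = 1 then α m n - 1
            else α m (n + q - 1) := by
          intro q
          rw [hd]
          simp only [dif_pos hm]
          rfl
        have hd0 : d m 0 = n := by rw [hdm, if_pos rfl]
        have hd1 : d m 1 = α m n - 1 := by rw [hdm]; norm_num
        have hd2 : ∀ r, d m (r+2) = α m (n + r + 1) := by
          intro r
          rw [hdm]
          have e : n + (r+2) - 1 = n + r + 1 := by omega
          simp [e]
        rw [gg]
        simp only [hδval, hd0]
        by_cases c1 : p < n
        · rw [if_pos c1]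
          by_contra hne
          exact Nat.find_min (h2 m hm) c1 (Ne.symm hne)
        · rw [if_neg c1]
          by_cases c2 : p = n
          · rw [if_pos c2, hd1]
            have hs := Nat.find_spec (h2 m hm)
            rw [← hn] at hs
            rw [c2]
            omega
          · rw [if_neg c2]
            have hgt : n < p := by omega
            have e : p - n + 1 = (p - n - 1) + 2 := by omega
            rw [e, hd2]
            congr 1
            omega
end

section
/- The Souslin operation applied to a family of analytic sets yields an analytic set: if A : List ℕ → Set (ℕ → ℕ) assigns to every finite sequence s an analytic subset A s of Baire space, then the set ⋃_{γ : ℕ → ℕ} ⋂_{n} A [γ 0, …, γ (n-1)] is analytic. -/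
open MeasureTheory Set

/-- A subset of Baire space is analytic iff it is empty or the continuous
image of Baire space. -/
def IsAnalyticSet (X : Set (ℕ → ℕ)) : Prop :=
  X = ∅ ∨ ∃ f : (ℕ → ℕ) → (ℕ → ℕ), Continuous f ∧ Set.range f = X

/-- The Souslin operation applied to a family of analytic sets yields an
analytic set. -/
theorem souslin_operation_analytic (A : List ℕ → Set (ℕ → ℕ))
    (hA : ∀ s, IsAnalyticSet (A s)) :
    IsAnalyticSet (⋃ γ : ℕ → ℕ, ⋂ n : ℕ, A ((List.range n).map γ)) := by
  -- choose closed sets C s whose projections are the A s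
  have hC : ∀ s, ∃ C : Set ((ℕ → ℕ) × (ℕ → ℕ)), IsClosed C ∧ A s = {x | ∃ y, (x, y) ∈ C} := by
    intro s
    rcases hA s with h | ⟨f, hf, hrange⟩
    · exact ⟨∅, isClosed_empty, by simp [h]⟩
    · refine ⟨{q | q.1 = f q.2}, isClosed_eq continuous_fst (hf.comp continuous_snd), ?_⟩
      rw [← hrange]; ext x
      simp only [Set.mem_range, Set.mem_setOf_eq]
      exact ⟨fun ⟨y, hy⟩ => ⟨y, hy.symm⟩, fun ⟨y, hy⟩ => ⟨y, hy.symm⟩⟩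
  choose C hCclosed hAC using hC
  haveI pol2 : PolishSpace ((ℕ → ℕ) × (ℕ → (ℕ → ℕ))) := inferInstance
  haveI pol : PolishSpace ((ℕ → ℕ) × ((ℕ → ℕ) × (ℕ → (ℕ → ℕ)))) := inferInstance
  set B : Set ((ℕ → ℕ) × ((ℕ → ℕ) × (ℕ → (ℕ → ℕ)))) := {p | ∀ n, (p.1, p.2.2 n) ∈ C ((List.range n).map p.2.1)} with hBdef
  have hB : IsClosed B := by
    have hBeq : B = ⋂ n, {p : (ℕ → ℕ) × ((ℕ → ℕ) × (ℕ → (ℕ → ℕ))) | (p.1, p.2.2 n) ∈ C ((List.range n).map p.2.1)} := by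
      ext p; simp [hBdef]
    rw [hBeq]
    refine isClosed_iInter fun n => ?_
    set L : (Fin n → ℕ) → List ℕ :=
      fun v => (List.range n).map (fun i => if h : i < n then v ⟨i, h⟩ else 0) with hL
    set K : Set ((Fin n → ℕ) × ((ℕ → ℕ) × (ℕ → ℕ))) := {q | q.2 ∈ C (L q.1)} with hK
    have hKclosed : IsClosed K := by
      rw [← isOpen_compl_iff]
      have : Kᶜ = ⋃ v : Fin n → ℕ, ({v} ×ˢ (C (L v))ᶜ) := by
        ext ⟨v, q⟩
        simp [hK, Set.mem_iUnion, eq_comm]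
      rw [this]
      exact isOpen_iUnion fun v => (isOpen_discrete _).prod (hCclosed _).isOpen_compl
    set Φ : (ℕ → ℕ) × ((ℕ → ℕ) × (ℕ → (ℕ → ℕ))) → (Fin n → ℕ) × ((ℕ → ℕ) × (ℕ → ℕ)) :=
      fun p => (fun i => p.2.1 i, (p.1, p.2.2 n)) with hΦdef
    have hΦ : Continuous Φ := by
      apply Continuous.prodMk
      · exact continuous_pi fun i =>
          (continuous_apply (i : ℕ)).comp (continuous_fst.comp continuous_snd)
      · exact continuous_fst.prodMk
          ((continuous_apply n).comp (continuous_snd.comp continuous_snd))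
    have hpre : {p : (ℕ → ℕ) × ((ℕ → ℕ) × (ℕ → (ℕ → ℕ))) | (p.1, p.2.2 n) ∈ C ((List.range n).map p.2.1)} = Φ ⁻¹' K := by
      ext p
      simp only [Set.mem_setOf_eq, Set.mem_preimage, hK, hΦdef, hL]
      have : (List.range n).map (fun i => if h : i < n then p.2.1 i else 0)
          = (List.range n).map p.2.1 := by
        apply List.map_congr_left
        intro i hi
        rw [dif_pos (List.mem_range.mp hi)]
      rw [this]
    rw [hpre]
    exact hKclosed.preimage hΦ
  have hAn : AnalyticSet (Prod.fst '' B) :=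
    (hB.analyticSet).image_of_continuous continuous_fst
  have hS : (⋃ γ : ℕ → ℕ, ⋂ n : ℕ, A ((List.range n).map γ)) = Prod.fst '' B := by
    ext x
    simp only [Set.mem_iUnion, Set.mem_iInter, Set.mem_image]
    constructor
    · rintro ⟨γ, hγ⟩
      have hz : ∀ m, ∃ y, (x, y) ∈ C ((List.range m).map γ) := by
        intro m
        have := hγ m
        rw [hAC] at this
        exact this
      choose z hzz using hz
      exact ⟨(x, γ, z), fun m => hzz m, rfl⟩
    · rintro ⟨⟨x', γ, z⟩, hp, rfl⟩
      refine ⟨γ, fun m => ?_⟩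
      rw [hAC]
      exact ⟨z m, hp m⟩
  rw [hS]
  rw [AnalyticSet_def] at hAn
  exact hAn
end
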